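/- Let D be a PvMD with nonzero nonunits x₁, x₂, …, xₙ ∈ D such that ((x₁, x₂, …, xₙ)D)^v = D, and suppose that for some j, 1 ≤ j ≤ n, the ring of fractions D_{x_j} is not a G-GCD domain. Let ∗ be the star operation of finite type defined by I^∗ := ⋂_{i=1}^n I D_{x_i} for every nonzero fractional ideal I of D. Then there exists a nonzero finitely generated ideal F of D such that F^v is not a ∗-invertible ideal; consequently the set of ∗-invertible ∗-ideals of D is strictly contained in the set of t-invertible t-ideals of D, i.e., Cl^∗(D) ⊊ Cl^t(D). -/

import Mathlib

set_option synthInstance.maxHeartbeats 1000000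
set_option maxHeartbeats 1000000


noncomputable section

/-- The `v`-operation `E ↦ (E⁻¹)⁻¹ = (R : (R : E))` on `R`-submodules of `K`. -/
def vOp (R K : Type*) [CommRing R] [Field K] [Algebra R K] (E : Submodule R K) :
    Submodule R K :=
  (1 : Submodule R K) / ((1 : Submodule R K) / E)

/-- The `t`-operation `E ↦ ⋃ {Jᵛ : J ⊆ E nonzero finitely generated}`. -/
def tOp (R K : Type*) [CommRing R] [Field K] [Algebra R K] (E : Submodule R K) :
    Submodule R K :=
  ⨆ (J : Submodule R K) (_ : J ≠ ⊥) (_ : J.FG) (_ : J ≤ E), vOp R K J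

/-- `I D_x = {z ∈ K : x^k • z ∈ I for some k ≥ 0}`, as a `D`-submodule of `K`. -/
def elemLocModule (D K : Type*) [CommRing D] [Field K] [Algebra D K]
    (x : D) (E : Submodule D K) : Submodule D K where
  carrier := {z : K | ∃ k : ℕ, x ^ k • z ∈ E}
  zero_mem' := ⟨0, by simp⟩
  add_mem' := by
    rintro z w ⟨k, hk⟩ ⟨m, hm⟩
    refine ⟨k + m, ?_⟩
    have hz : x ^ (k + m) • z = x ^ m • (x ^ k • z) := by
      rw [pow_add, mul_comm, mul_smul]
    have hw : x ^ (k + m) • w = x ^ k • (x ^ m • w) := by rw [pow_add, mul_smul]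
    rw [smul_add, hz, hw]
    exact Submodule.add_mem _ (Submodule.smul_mem _ _ hk) (Submodule.smul_mem _ _ hm)
  smul_mem' := by
    rintro r z ⟨k, hk⟩
    exact ⟨k, by rw [smul_comm]; exact Submodule.smul_mem _ _ hk⟩

/-- The ring of fractions `D_x` of `D` with respect to `{x^k : k ≥ 0}`, realized as the
subalgebra `{z ∈ K : x^k • z ∈ D for some k ≥ 0}` of the quotient field `K`. -/
def elemLocSub (D K : Type*) [CommRing D] [Field K] [Algebra D K] (x : D) :
    Subalgebra D K where
  carrier := {z : K | ∃ k : ℕ, x ^ k • z ∈ (1 : Submodule D K)}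
  algebraMap_mem' r := ⟨0, by simp⟩
  mul_mem' := by
    rintro z w ⟨k, hk⟩ ⟨m, hm⟩
    refine ⟨k + m, ?_⟩
    have h1 : (x ^ k • z) * (x ^ m • w) = (x ^ k * x ^ m) • (z * w) :=
      smul_mul_smul_comm (x ^ k) z (x ^ m) w
    have h2 := Submodule.mul_mem_mul hk hm
    rw [mul_one, h1, ← pow_add] at h2
    exact h2
  add_mem' := by
    rintro z w ⟨k, hk⟩ ⟨m, hm⟩
    refine ⟨k + m, ?_⟩
    have hz : x ^ (k + m) • z = x ^ m • (x ^ k • z) := by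
      rw [pow_add, mul_comm, mul_smul]
    have hw : x ^ (k + m) • w = x ^ k • (x ^ m • w) := by rw [pow_add, mul_smul]
    rw [smul_add, hz, hw]
    exact Submodule.add_mem _ (Submodule.smul_mem _ _ hk) (Submodule.smul_mem _ _ hm)

section Generic
variable {R K : Type*} [CommRing R] [Field K] [Algebra R K]

lemma mem_oneDiv {E : Submodule R K} {z : K} :
    z ∈ (1:Submodule R K)/E ↔ ∀ w ∈ E, z*w ∈ (1:Submodule R K) :=
  Submodule.mem_div_iff_forall_mul_mem

lemma oneDiv_antitone {E F : Submodule R K} (h : E ≤ F) :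
    (1:Submodule R K)/F ≤ 1/E := fun z hz => mem_oneDiv.2 fun w hw => mem_oneDiv.1 hz w (h hw)

lemma le_oneDiv_oneDiv (E : Submodule R K) : E ≤ (1:Submodule R K)/(1/E) := fun z hz =>
  mem_oneDiv.2 fun w hw => by rw [mul_comm]; exact mem_oneDiv.1 hw z hz

lemma le_vOp (E : Submodule R K) : E ≤ vOp R K E := le_oneDiv_oneDiv E

lemma oneDiv_one : (1:Submodule R K)/1 = 1 := by
  apply le_antisymm
  · intro z hz
    have := mem_oneDiv.1 hz 1 (Submodule.mem_one.2 ⟨1, map_one _⟩)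
    rwa [mul_one] at this
  · intro z hz
    refine mem_oneDiv.2 fun w hw => ?_
    obtain ⟨a, ha⟩ := Submodule.mem_one.1 hz; obtain ⟨b, hb⟩ := Submodule.mem_one.1 hw
    exact Submodule.mem_one.2 ⟨a*b, by rw [map_mul, ha, hb]⟩

lemma tripleDiv (E : Submodule R K) :
    (1:Submodule R K)/(1/((1:Submodule R K)/E)) = 1/E :=
  le_antisymm (oneDiv_antitone (le_oneDiv_oneDiv E)) (le_oneDiv_oneDiv _)

lemma oneDiv_vOp (E : Submodule R K) : (1:Submodule R K)/(vOp R K E) = 1/E := tripleDiv E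

lemma vOp_mono {E F : Submodule R K} (h : E ≤ F) : vOp R K E ≤ vOp R K F :=
  oneDiv_antitone (oneDiv_antitone h)

lemma vOp_vOp (E : Submodule R K) : vOp R K (vOp R K E) = vOp R K E := by
  show (1:Submodule R K)/(1/((1:Submodule R K)/(1/E))) = 1/(1/E)
  rw [tripleDiv]

lemma vOp_one : vOp R K 1 = 1 := by unfold vOp; rw [oneDiv_one, oneDiv_one]

lemma vOp_le_one {E : Submodule R K} (h : E ≤ 1) : vOp R K E ≤ 1 := by
  rw [← vOp_one (R := R) (K := K)]; exact vOp_mono h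

lemma mul_oneDiv_le_one (E : Submodule R K) : E * ((1:Submodule R K)/E) ≤ 1 :=
  Submodule.mul_le.2 fun a ha b hb => by rw [mul_comm]; exact mem_oneDiv.1 hb a ha

lemma vOp_mul_le (E F : Submodule R K) : vOp R K E * F ≤ vOp R K (E * F) :=
  Submodule.mul_le.2 fun a ha b hb => mem_oneDiv.2 fun w hw => by
    have hbw : b * w ∈ (1:Submodule R K)/E := mem_oneDiv.2 fun e he => by
      have h1 := mem_oneDiv.1 hw (e*b) (Submodule.mul_mem_mul he hb)
      have h2 : b*w*e = w*(e*b) := by ring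
      rw [h2]; exact h1
    have h1 := mem_oneDiv.1 ha _ hbw
    have h2 : a*b*w = a*(b*w) := by ring
    rw [h2]; exact h1

lemma vOp_le_tOp {E J : Submodule R K} (h1 : J ≠ ⊥) (h2 : J.FG) (h3 : J ≤ E) :
    vOp R K J ≤ tOp R K E := by
  have := le_iSup (fun (_ : J ≤ E) => vOp R K J) h3
  exact this.trans (le_iSup_of_le J (le_iSup_of_le h1 (le_iSup_of_le h2 le_rfl)))

lemma tOp_le {E : Submodule R K} {M : Submodule R K}
    (h : ∀ J : Submodule R K, J ≠ ⊥ → J.FG → J ≤ E → vOp R K J ≤ M) : tOp R K E ≤ M :=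
  iSup_le fun J => iSup_le fun h1 => iSup_le fun h2 => iSup_le fun h3 => h J h1 h2 h3

lemma tOp_mono {E F : Submodule R K} (h : E ≤ F) : tOp R K E ≤ tOp R K F :=
  tOp_le fun J h1 h2 h3 => vOp_le_tOp h1 h2 (h3.trans h)

lemma tOp_le_one {E : Submodule R K} (h : E ≤ 1) : tOp R K E ≤ 1 :=
  tOp_le fun _ _ _ h3 => vOp_le_one (h3.trans h)

lemma le_tOp {E : Submodule R K} : E ≤ tOp R K E := by
  intro z hz
  by_cases h0 : z = 0
  · simp [h0]
  · have hJ : Submodule.span R {z} ≠ ⊥ := by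
      simp [Submodule.span_singleton_eq_bot, h0]
    exact vOp_le_tOp hJ (Submodule.fg_span_singleton z)
      ((Submodule.span_singleton_le_iff_mem z E).2 hz)
      (le_vOp _ (Submodule.mem_span_singleton_self z))

/-- extraction of membership in `tOp`. -/
lemma mem_tOp {E : Submodule R K} {z : K} (hz : z ∈ tOp R K E) (hE : E ≠ ⊥) :
    ∃ J : Submodule R K, J ≠ ⊥ ∧ J.FG ∧ J ≤ E ∧ z ∈ vOp R K J := by
  obtain ⟨e, heE, he0⟩ := Submodule.exists_mem_ne_zero_of_ne_bot hE
  have hadm : Submodule.span R {e} ≠ ⊥ := by simp [Submodule.span_singleton_eq_bot, he0]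
  set N : Submodule R K :=
    { carrier := {w : K | ∃ J : Submodule R K, J ≠ ⊥ ∧ J.FG ∧ J ≤ E ∧ w ∈ vOp R K J}
      zero_mem' := ⟨Submodule.span R {e}, hadm, Submodule.fg_span_singleton e,
        (Submodule.span_singleton_le_iff_mem e E).2 heE, Submodule.zero_mem _⟩
      add_mem' := by
        rintro a b ⟨J1, h1, h2, h3, h4⟩ ⟨J1', h1', h2', h3', h4'⟩
        refine ⟨J1 ⊔ J1', fun hb => h1 (eq_bot_iff.2 (le_sup_left.trans hb.le)), h2.sup h2',
          sup_le h3 h3', Submodule.add_mem _ (vOp_mono le_sup_left h4) (vOp_mono le_sup_right h4')⟩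
      smul_mem' := by
        rintro c a ⟨J1, h1, h2, h3, h4⟩
        exact ⟨J1, h1, h2, h3, Submodule.smul_mem _ _ h4⟩ } with hN
  have : tOp R K E ≤ N := tOp_le fun J h1 h2 h3 => fun w hw => ⟨J, h1, h2, h3, hw⟩
  exact this hz

/-- every element of `E * F` lies in `E * H` for some f.g. `H ≤ F`. -/
lemma exists_fg_of_mem_mul {E F : Submodule R K} {z : K} (hz : z ∈ E * F) :
    ∃ H : Submodule R K, H.FG ∧ H ≤ F ∧ z ∈ E * H := by
  set N : Submodule R K :=
    { carrier := {w : K | ∃ H : Submodule R K, H.FG ∧ H ≤ F ∧ w ∈ E * H}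
      zero_mem' := ⟨⊥, Submodule.fg_bot, bot_le, Submodule.zero_mem _⟩
      add_mem' := by
        rintro a b ⟨H1, h1, h2, h3⟩ ⟨H2, h1', h2', h3'⟩
        refine ⟨H1 ⊔ H2, h1.sup h1', sup_le h2 h2', Submodule.add_mem _ ?_ ?_⟩
        · exact (mul_le_mul_right le_sup_left _ : E * H1 ≤ E * (H1 ⊔ H2)) h3
        · exact (mul_le_mul_right le_sup_right _ : E * H2 ≤ E * (H1 ⊔ H2)) h3'
      smul_mem' := by
        rintro c a ⟨H1, h1, h2, h3⟩
        exact ⟨H1, h1, h2, Submodule.smul_mem _ _ h3⟩ } with hN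
  have : E * F ≤ N := Submodule.mul_le.2 fun a ha b hb =>
    ⟨Submodule.span R {b}, Submodule.fg_span_singleton b,
      (Submodule.span_singleton_le_iff_mem b F).2 hb,
      Submodule.mul_mem_mul ha (Submodule.mem_span_singleton_self b)⟩
  exact this hz

lemma mul_mem_one {a b : K} (ha : a ∈ (1:Submodule R K)) (hb : b ∈ (1:Submodule R K)) :
    a * b ∈ (1:Submodule R K) := by
  obtain ⟨c, hc⟩ := Submodule.mem_one.1 ha; obtain ⟨d, hd⟩ := Submodule.mem_one.1 hb
  exact Submodule.mem_one.2 ⟨c*d, by rw [map_mul, hc, hd]⟩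

lemma mem_oneDiv_span {t : Set K} {z : K}
    (h : ∀ a ∈ t, z * a ∈ (1:Submodule R K)) : z ∈ (1:Submodule R K)/Submodule.span R t := by
  rw [Submodule.mem_div_iff_forall_mul_mem]
  intro w hw
  induction hw using Submodule.span_induction with
  | mem a ha => exact h a ha
  | zero => rw [mul_zero]; exact Submodule.zero_mem _
  | add a b _ _ ha hb => rw [mul_add]; exact Submodule.add_mem _ ha hb
  | smul c a _ ha => rw [Algebra.mul_smul_comm]; exact Submodule.smul_mem _ _ ha

end Generic

section DSide
variable {D K : Type*} [CommRing D] [IsDomain D] [Field K] [Algebra D K] [IsFractionRing D K]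

lemma mem_loc {x : D} {E : Submodule D K} {z : K} :
    z ∈ elemLocModule D K x E ↔ ∃ k : ℕ, x ^ k • z ∈ E := Iff.rfl

lemma le_loc (x : D) (E : Submodule D K) : E ≤ elemLocModule D K x E :=
  fun z hz => ⟨0, by simpa using hz⟩

lemma loc_mono (x : D) {E F : Submodule D K} (h : E ≤ F) :
    elemLocModule D K x E ≤ elemLocModule D K x F := by
  rintro z ⟨k, hk⟩; exact ⟨k, h hk⟩

lemma loc_loc {x : D} {E : Submodule D K} {z : K}
    (hz : z ∈ elemLocModule D K x (elemLocModule D K x E)) : z ∈ elemLocModule D K x E := by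
  obtain ⟨k, m, hm⟩ := hz
  refine ⟨m + k, ?_⟩
  rw [pow_add, mul_smul]; exact hm

variable {n : ℕ} {x : Fin n → D}

/-- The image of `(x₁,…,xₙ)` in `K`. -/
lemma map_span_eq :
    Submodule.map (Algebra.linearMap D K) (Ideal.span (Set.range x)) =
      Submodule.span D (algebraMap D K '' Set.range x) := by
  rw [Ideal.span, Submodule.map_span]; rfl

lemma hA1 (hv : vOp D K (Submodule.map (Algebra.linearMap D K)
      (Ideal.span (Set.range x))) = 1) {z : K}
    (h : ∀ i, algebraMap D K (x i) * z ∈ (1 : Submodule D K)) : z ∈ (1 : Submodule D K) := by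
  have hdiv : (1:Submodule D K) / Submodule.map (Algebra.linearMap D K)
      (Ideal.span (Set.range x)) = 1 := by
    rw [← oneDiv_vOp, hv, oneDiv_one]
  rw [← hdiv, map_span_eq]
  apply mem_oneDiv_span
  rintro a ⟨b, ⟨i, rfl⟩, rfl⟩
  rw [mul_comm]; exact h i

lemma claim' (hv : vOp D K (Submodule.map (Algebra.linearMap D K)
      (Ideal.span (Set.range x))) = 1) :
    ∀ (m : ℕ) (z : K), (∀ f : Fin m → Fin n,
      algebraMap D K (∏ t, x (f t)) * z ∈ (1 : Submodule D K)) → z ∈ (1 : Submodule D K) := by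
  intro m
  induction m with
  | zero =>
    intro z h
    have := h Fin.elim0
    simpa using this
  | succ m ih =>
    intro z h
    apply hA1 hv
    intro i
    apply ih
    intro f
    have := h (Fin.cons i f)
    have hp : (∏ t : Fin (m+1), x ((Fin.cons i f : Fin (m+1) → Fin n) t)) =
        x i * ∏ t : Fin m, x (f t) := by
      rw [Fin.prod_univ_succ]; simp
    rw [hp, map_mul] at this
    have e : algebraMap D K (x i) * algebraMap D K (∏ t : Fin m, x (f t)) * z =
        algebraMap D K (∏ t : Fin m, x (f t)) * (algebraMap D K (x i) * z) := by ring
    rw [e] at this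
    exact this

lemma starOne (hv : vOp D K (Submodule.map (Algebra.linearMap D K)
      (Ideal.span (Set.range x))) = 1) :
    (⨅ i : Fin n, elemLocModule D K (x i) 1) = (1 : Submodule D K) := by
  apply le_antisymm
  · intro z hz
    rw [Submodule.mem_iInf] at hz
    choose kk hkk using fun i => hz i
    set k := Finset.univ.sup kk with hkdef
    have hk : ∀ i, x i ^ k • z ∈ (1:Submodule D K) := by
      intro i
      have hle : kk i ≤ k := Finset.le_sup (Finset.mem_univ i)
      have : x i ^ k • z = x i ^ (k - kk i) • (x i ^ kk i • z) := by
        rw [← mul_smul, ← pow_add, Nat.sub_add_cancel hle]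
      rw [this]; exact Submodule.smul_mem _ _ (hkk i)
    apply claim' hv (n*k+1) z
    intro f
    -- pigeonhole
    have hcard : ∃ i0 : Fin n, k < (Finset.univ.filter (fun t => f t = i0)).card := by
      by_contra hc
      push_neg at hc
      have hsum := Finset.card_eq_sum_card_fiberwise
        (f := f) (s := Finset.univ) (t := Finset.univ) (fun t _ => Finset.mem_univ (f t))
      have h1 : (Finset.univ : Finset (Fin (n*k+1))).card ≤ n * k := by
        rw [hsum]
        calc (∑ i : Fin n, (Finset.univ.filter (fun t => f t = i)).card)
            ≤ ∑ _i : Fin n, k := Finset.sum_le_sum (fun i _ => hc i)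
          _ = n * k := by simp [mul_comm]
      have h2 : (Finset.univ : Finset (Fin (n*k+1))).card = n*k+1 := by simp
      omega
    obtain ⟨i0, hi0⟩ := hcard
    set c := (Finset.univ.filter (fun t => f t = i0)).card with hc
    have hsplit : (∏ t, x (f t)) =
        (∏ t ∈ Finset.univ.filter (fun t => f t = i0), x (f t)) *
        (∏ t ∈ Finset.univ.filter (fun t => ¬ f t = i0), x (f t)) :=
      (Finset.prod_filter_mul_prod_filter_not _ _ _).symm
    have hfib : (∏ t ∈ Finset.univ.filter (fun t => f t = i0), x (f t)) = x i0 ^ c := by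
      rw [Finset.prod_congr rfl (fun t ht => by
        rw [(Finset.mem_filter.1 ht).2] : ∀ t ∈ Finset.univ.filter (fun t => f t = i0),
          x (f t) = x i0), Finset.prod_const]
    set r := (∏ t ∈ Finset.univ.filter (fun t => ¬ f t = i0), x (f t)) with hr
    have hxc : x i0 ^ c = x i0 ^ (c - k) * x i0 ^ k := by
      rw [← pow_add, Nat.sub_add_cancel hi0.le]
    have key : algebraMap D K (∏ t, x (f t)) * z =
        (x i0 ^ (c - k) * r) • (x i0 ^ k • z) := by
      rw [hsplit, hfib, hxc, Algebra.smul_def, Algebra.smul_def, map_mul, map_mul, map_mul]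
      ring
    rw [key]
    exact Submodule.smul_mem _ _ (hk i0)
  · intro z hz
    rw [Submodule.mem_iInf]
    exact fun i => le_loc _ _ hz

lemma star_le_tOp (hn : 1 ≤ n) (hx0 : ∀ i, x i ≠ 0)
    (hv : vOp D K (Submodule.map (Algebra.linearMap D K)
      (Ideal.span (Set.range x))) = 1) (E : Submodule D K) :
    (⨅ i : Fin n, elemLocModule D K (x i) E) ≤ tOp D K E := by
  intro z hz
  by_cases h0 : z = 0
  · rw [h0]; exact Submodule.zero_mem _
  rw [Submodule.mem_iInf] at hz
  choose kk hkk using fun i => hz i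
  set g : Fin n → K := fun i => x i ^ kk i • z with hg
  set J := Submodule.span D (Set.range g) with hJ
  have hJE : J ≤ E := Submodule.span_le.2 (by rintro a ⟨i, rfl⟩; exact hkk i)
  have hJFG : J.FG := Submodule.fg_span (Set.finite_range g)
  have hgne : g ⟨0, hn⟩ ≠ 0 := by
    simp only [hg, Algebra.smul_def]
    have h1 : x ⟨0,hn⟩ ^ kk ⟨0,hn⟩ ≠ 0 := pow_ne_zero _ (hx0 _)
    have h2 : algebraMap D K (x ⟨0,hn⟩ ^ kk ⟨0,hn⟩) ≠ 0 :=
      fun hcontra => h1 (IsFractionRing.injective D K (by rw [hcontra, map_zero]))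
    exact mul_ne_zero h2 h0
  have hJne : J ≠ ⊥ := by
    intro hb
    apply hgne
    have : g ⟨0, hn⟩ ∈ J := Submodule.subset_span ⟨_, rfl⟩
    rwa [hb, Submodule.mem_bot] at this
  refine vOp_le_tOp hJne hJFG hJE ?_
  refine mem_oneDiv.2 fun w hw => ?_
  rw [← starOne hv, Submodule.mem_iInf]
  intro i
  refine ⟨kk i, ?_⟩
  have : x i ^ kk i • (z * w) = (x i ^ kk i • z) * w := by rw [smul_mul_assoc]
  rw [this, mul_comm]
  exact mem_oneDiv.1 hw _ (Submodule.subset_span ⟨i, rfl⟩)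

/-- From the P`v`MD hypothesis: for a nonzero f.g. ideal `F`, there is a f.g. `H ≤ F⁻¹`
with `1/H = Fᵛ`. -/
lemma pvmd_inv {F : Ideal D} (hF0 : F ≠ ⊥) (hFG : F.FG)
    (hp : tOp D K (Submodule.map (Algebra.linearMap D K) F *
      ((1:Submodule D K) / Submodule.map (Algebra.linearMap D K) F)) = 1) :
    ∃ H : Submodule D K, H.FG ∧
      H ≤ (1:Submodule D K) / Submodule.map (Algebra.linearMap D K) F ∧
      (1:Submodule D K)/H = vOp D K (Submodule.map (Algebra.linearMap D K) F) := by
  set FK := Submodule.map (Algebra.linearMap D K) F with hFK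
  have hFK1 : FK ≤ 1 := by
    rintro z ⟨a, _, rfl⟩
    exact Submodule.mem_one.2 ⟨a, rfl⟩
  have hFKne : FK ≠ ⊥ := by
    obtain ⟨a, haF, ha0⟩ := Submodule.exists_mem_ne_zero_of_ne_bot hF0
    intro hb
    have : algebraMap D K a ∈ FK := ⟨a, haF, rfl⟩
    rw [hb, Submodule.mem_bot] at this
    exact ha0 (IsFractionRing.injective D K (by rw [this, map_zero]))
  have hprodne : FK * ((1:Submodule D K)/FK) ≠ ⊥ := by
    obtain ⟨a, haF, ha0⟩ := Submodule.exists_mem_ne_zero_of_ne_bot hFKne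
    have h1 : (1:K) ∈ (1:Submodule D K)/FK :=
      mem_oneDiv.2 fun w hw => by rw [one_mul]; exact hFK1 hw
    intro hb
    have : a * 1 ∈ FK * ((1:Submodule D K)/FK) := Submodule.mul_mem_mul haF h1
    rw [hb, Submodule.mem_bot, mul_one] at this
    exact ha0 this
  have h1mem : (1:K) ∈ tOp D K (FK * ((1:Submodule D K)/FK)) := by
    rw [hp]; exact Submodule.mem_one.2 ⟨1, map_one _⟩
  obtain ⟨J, hJne, hJFG, hJle, h1J⟩ := mem_tOp h1mem hprodne
  obtain ⟨s, hs⟩ := hJFG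
  have hchoice : ∀ z : K, ∃ H : Submodule D K, H.FG ∧
      H ≤ (1:Submodule D K)/FK ∧ (z ∈ (s : Set K) → z ∈ FK * H) := by
    intro z
    by_cases hz : z ∈ FK * ((1:Submodule D K)/FK)
    · obtain ⟨H, h1, h2, h3⟩ := exists_fg_of_mem_mul hz
      exact ⟨H, h1, h2, fun _ => h3⟩
    · refine ⟨⊥, Submodule.fg_bot, bot_le, fun hzs => absurd ?_ hz⟩
      exact hJle (hs ▸ Submodule.subset_span hzs)
  choose Hf hHfg hHle hHmem using hchoice
  set H := s.sup Hf with hH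
  have hHFG : H.FG := Finset.sup_induction Submodule.fg_bot (fun a ha b hb => ha.sup hb)
    (fun z _ => hHfg z)
  have hHle1 : H ≤ (1:Submodule D K)/FK := Finset.sup_le fun z _ => hHle z
  have hJleFH : J ≤ FK * H := by
    rw [← hs]
    apply Submodule.span_le.2
    intro z hz
    exact (mul_le_mul_right (Finset.le_sup hz) _ : FK * Hf z ≤ FK * H) (hHmem z hz)
  -- `vOp (FK * H) = 1`
  have hv1 : vOp D K (FK * H) = 1 := by
    apply le_antisymm
    · apply vOp_le_one
      exact Submodule.mul_le.2 fun a ha b hb => by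
        rw [mul_comm]; exact mem_oneDiv.1 (hHle1 hb) a ha
    · have h1v : (1:K) ∈ vOp D K (FK * H) := vOp_mono hJleFH h1J
      intro w hw
      obtain ⟨a, rfl⟩ := Submodule.mem_one.1 hw
      have h2 : a • (1:K) ∈ vOp D K (FK * H) := Submodule.smul_mem _ a h1v
      rwa [Algebra.smul_def, mul_one] at h2
  -- `1/H = vOp FK`
  refine ⟨H, hHFG, hHle1, ?_⟩
  have hvH : vOp D K H = (1:Submodule D K)/FK := by
    apply le_antisymm
    · have : vOp D K ((1:Submodule D K)/FK) = (1:Submodule D K)/FK := tripleDiv FK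
      exact this ▸ vOp_mono hHle1
    · intro u hu
      refine mem_oneDiv.2 fun w hw => ?_
      have huw : u * w ∈ (1:Submodule D K)/(FK * H) := by
        refine mem_oneDiv.2 fun p hp => ?_
        have hle2 : FK * H ≤ (1:Submodule D K) / Submodule.span D {u*w} := by
          refine Submodule.mul_le.2 fun a ha b hb => mem_oneDiv_span fun q hq => ?_
          rw [Set.mem_singleton_iff] at hq
          subst hq
          have e : a * b * (u * w) = (u * a) * (w * b) := by ring
          rw [e]
          exact mul_mem_one (mem_oneDiv.1 hu a ha) (mem_oneDiv.1 hw b hb)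
        have := mem_oneDiv.1 (hle2 hp) (u*w) (Submodule.mem_span_singleton_self _)
        rwa [mul_comm] at this
      rwa [← oneDiv_vOp, hv1, oneDiv_one] at huw
  rw [← oneDiv_vOp, hvH]
  rfl

/-- A `∗`-invertible `∗`-ideal is a `t`-invertible `t`-ideal. -/
lemma star_to_t (hn : 1 ≤ n) (hx0 : ∀ i, x i ≠ 0)
    (hv : vOp D K (Submodule.map (Algebra.linearMap D K)
      (Ideal.span (Set.range x))) = 1) {I : Submodule D K}
    (hstar : (⨅ i : Fin n, elemLocModule D K (x i) I) = I)
    (hinv : (⨅ i : Fin n, elemLocModule D K (x i) (I * ((1:Submodule D K)/I))) = 1) :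
    tOp D K I = I ∧ tOp D K (I * ((1:Submodule D K)/I)) = 1 := by
  have htinv : tOp D K (I * ((1:Submodule D K)/I)) = 1 := by
    apply le_antisymm (tOp_le_one (mul_oneDiv_le_one I))
    calc (1:Submodule D K) = ⨅ i : Fin n, elemLocModule D K (x i)
          (I * ((1:Submodule D K)/I)) := hinv.symm
      _ ≤ tOp D K (I * ((1:Submodule D K)/I)) := star_le_tOp hn hx0 hv _
  refine ⟨le_antisymm (tOp_le fun J hJne hJFG hJle => ?_) le_tOp, htinv⟩
  intro u hu
  -- step 1: `u • (1/I) ⊆ 1`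
  have step1 : ∀ w ∈ (1:Submodule D K)/I, u * w ∈ (1:Submodule D K) := by
    intro w hw
    by_cases hw0 : w = 0
    · rw [hw0, mul_zero]; exact Submodule.zero_mem _
    have h1 : J * Submodule.span D {w} ≠ ⊥ := by
      obtain ⟨a, haJ, ha0⟩ := Submodule.exists_mem_ne_zero_of_ne_bot hJne
      intro hb
      have : a * w ∈ J * Submodule.span D {w} :=
        Submodule.mul_mem_mul haJ (Submodule.mem_span_singleton_self w)
      rw [hb, Submodule.mem_bot] at this
      exact (mul_ne_zero ha0 hw0) this
    have h2 : (J * Submodule.span D {w}).FG := hJFG.mul (Submodule.fg_span_singleton w)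
    have h3 : J * Submodule.span D {w} ≤ I * ((1:Submodule D K)/I) :=
      mul_le_mul' hJle ((Submodule.span_singleton_le_iff_mem w _).2 hw)
    have h4 : u * w ∈ vOp D K (J * Submodule.span D {w}) :=
      vOp_mul_le J (Submodule.span D {w}) (Submodule.mul_mem_mul hu
        (Submodule.mem_span_singleton_self w))
    have h5 := vOp_le_tOp h1 h2 h3 h4
    rwa [htinv] at h5
  -- step 2
  have hsu : Submodule.span D {u} * ((1:Submodule D K)/I) ≤ 1 := by
    refine Submodule.mul_le.2 fun a ha w hw => ?_
    obtain ⟨c, rfl⟩ := Submodule.mem_span_singleton.1 ha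
    rw [smul_mul_assoc]
    exact Submodule.smul_mem _ _ (step1 w hw)
  have hkey : Submodule.span D {u} * (I * ((1:Submodule D K)/I)) ≤ I := by
    have e : Submodule.span D {u} * (I * ((1:Submodule D K)/I)) =
        (Submodule.span D {u} * ((1:Submodule D K)/I)) * I := by ring
    rw [e]
    calc (Submodule.span D {u} * ((1:Submodule D K)/I)) * I ≤ 1 * I :=
          mul_le_mul_left hsu _
      _ = I := Submodule.one_mul I
  rw [← hstar, Submodule.mem_iInf]
  intro i
  have h1m : (1:K) ∈ ⨅ i : Fin n, elemLocModule D K (x i) (I * ((1:Submodule D K)/I)) := by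
    rw [hinv]; exact Submodule.mem_one.2 ⟨1, map_one _⟩
  rw [Submodule.mem_iInf] at h1m
  obtain ⟨k, hk⟩ := h1m i
  refine ⟨k, ?_⟩
  have e1 : x i ^ k • u = u * (x i ^ k • (1:K)) := by
    rw [Algebra.smul_def, Algebra.smul_def, mul_one, mul_comm]
  rw [e1]
  exact hkey (Submodule.mul_mem_mul (Submodule.mem_span_singleton_self u) hk)

section Bridge
variable {x : D}

/-- membership in `1 : Submodule R K` for `R = D_x`. -/
lemma mem_oneR {z : K} :
    z ∈ (1 : Submodule ↥(elemLocSub D K x) K) ↔ z ∈ elemLocSub D K x := by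
  rw [Submodule.mem_one]
  constructor
  · rintro ⟨y, rfl⟩; exact y.2
  · intro hz; exact ⟨⟨z, hz⟩, rfl⟩

lemma smulR (r : ↥(elemLocSub D K x)) (z : K) : r • z = (r : K) * z := by
  rw [Algebra.smul_def]; rfl

/-- saturation of `R`-submodules of `K`. -/
lemma sat (hx0 : x ≠ 0) (M : Submodule ↥(elemLocSub D K x) K) {z : K} {m : ℕ}
    (h : x ^ m • z ∈ M) : z ∈ M := by
  have hxK0 : algebraMap D K x ≠ 0 :=
    fun hc => hx0 (IsFractionRing.injective D K (by rw [hc, map_zero]))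
  have hξS : (algebraMap D K x)⁻¹ ∈ elemLocSub D K x := by
    refine ⟨1, ?_⟩
    rw [pow_one, Algebra.smul_def, mul_inv_cancel₀ hxK0]
    exact Submodule.mem_one.2 ⟨1, map_one _⟩
  set ξR : ↥(elemLocSub D K x) := ⟨(algebraMap D K x)⁻¹, hξS⟩ with hξR
  have e : z = (ξR ^ m) • (x ^ m • z) := by
    rw [smulR, Algebra.smul_def, map_pow]
    have : ((ξR ^ m : ↥(elemLocSub D K x)) : K) = (algebraMap D K x)⁻¹ ^ m := by
      rw [hξR]; push_cast; ring
    rw [this, ← mul_assoc, ← mul_pow, inv_mul_cancel₀ hxK0, one_pow, one_mul]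
  rw [e]
  exact M.smul_mem _ h

lemma hup (E : Submodule D K) (z : K) {l m : ℕ} (hlm : l ≤ m)
    (h : x ^ l • z ∈ E) : x ^ m • z ∈ E := by
  have e : x ^ m • z = x ^ (m - l) • (x ^ l • z) := by
    rw [← mul_smul, ← pow_add, Nat.sub_add_cancel hlm]
  rw [e]; exact E.smul_mem _ h

lemma bridge
    (hpvmd : ∀ F : Ideal D, F ≠ ⊥ → F.FG →
      tOp D K (Submodule.map (Algebra.linearMap D K) F *
          ((1 : Submodule D K) / Submodule.map (Algebra.linearMap D K) F)) = 1)
    (hx0 : x ≠ 0)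
    (F0 : Ideal ↥(elemLocSub D K x)) (hF0ne : F0 ≠ ⊥) (hF0fg : F0.FG) :
    ∃ F : Ideal D, F ≠ ⊥ ∧ F.FG ∧
      ((1:Submodule D K) ≤ elemLocModule D K x
          (vOp D K (Submodule.map (Algebra.linearMap D K) F) *
            ((1:Submodule D K)/vOp D K (Submodule.map (Algebra.linearMap D K) F))) →
        vOp ↥(elemLocSub D K x) K
            (Submodule.map (Algebra.linearMap ↥(elemLocSub D K x) K) F0) *
          ((1:Submodule ↥(elemLocSub D K x) K) /
            vOp ↥(elemLocSub D K x) K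
              (Submodule.map (Algebra.linearMap ↥(elemLocSub D K x) K) F0)) = 1) := by
  classical
  set G := Submodule.map (Algebra.linearMap ↥(elemLocSub D K x) K) F0 with hG
  obtain ⟨s, hs⟩ := hF0fg
  -- common exponent for the generators
  have hch1 : ∀ g : ↥(elemLocSub D K x), ∃ m : ℕ, x ^ m • (g : K) ∈ (1:Submodule D K) :=
    fun g => g.2
  choose kk hkk using hch1
  set k := s.sup kk with hk
  have hkx : ∀ g ∈ s, x ^ k • (g : K) ∈ (1:Submodule D K) :=
    fun g hg => hup _ _ (Finset.le_sup hg) (hkk g)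
  -- choose preimages in `D`
  have hch2 : ∀ g : ↥(elemLocSub D K x), ∃ d : D,
      g ∈ s → algebraMap D K d = x ^ k • (g : K) := by
    intro g
    by_cases hg : g ∈ s
    · obtain ⟨d, hd⟩ := Submodule.mem_one.1 (hkx g hg)
      exact ⟨d, fun _ => hd⟩
    · exact ⟨0, fun h => absurd h hg⟩
  choose dd hdd using hch2
  set F : Ideal D := Ideal.span (dd '' ↑s) with hF
  set FK := Submodule.map (Algebra.linearMap D K) F with hFK
  set T : Set K := (fun g : ↥(elemLocSub D K x) => x ^ k • (g : K)) '' ↑s with hT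
  have hFKT : FK = Submodule.span D T := by
    rw [hFK, hF, Ideal.span, Submodule.map_span, Set.image_image, hT]
    congr 1
    apply Set.image_congr
    intro g hg
    exact hdd g hg
  -- F is f.g.
  have hFfg : F.FG := Submodule.fg_span ((s.finite_toSet).image dd)
  -- F ≠ ⊥
  have hg0 : ∃ g0 ∈ s, g0 ≠ 0 := by
    by_contra hc
    push_neg at hc
    apply hF0ne
    rw [← hs, eq_bot_iff]
    apply Submodule.span_le.2
    intro g hg
    rw [SetLike.mem_coe, Submodule.mem_bot]
    exact hc g hg
  obtain ⟨g0, hg0s, hg00⟩ := hg0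
  have hxK0 : algebraMap D K x ≠ 0 :=
    fun hc => hx0 (IsFractionRing.injective D K (by rw [hc, map_zero]))
  have hFne : F ≠ ⊥ := by
    intro hb
    apply hg00
    have hdmem : dd g0 ∈ F := Submodule.subset_span ⟨g0, hg0s, rfl⟩
    rw [hb, Submodule.mem_bot] at hdmem
    have hzero : algebraMap D K (dd g0) = x ^ k • (g0 : K) := hdd g0 hg0s
    rw [hdmem, map_zero] at hzero
    have h2 : (g0 : K) = 0 := by
      have hp : algebraMap D K (x ^ k) ≠ 0 := by
        rw [map_pow]; exact pow_ne_zero _ hxK0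
      rw [Algebra.smul_def] at hzero
      rcases mul_eq_zero.1 hzero.symm with h | h
      · exact absurd h hp
      · exact h
    exact Subtype.ext h2
  refine ⟨F, hFne, hFfg, ?_⟩
  intro hP
  -- (α) : T ⊆ G, hence FK ≤ G (as sets)
  have hTsubG : ∀ z ∈ T, z ∈ G := by
    rintro z ⟨g, hg, rfl⟩
    have hgG : (g : K) ∈ G := ⟨g, hs ▸ Submodule.subset_span hg, rfl⟩
    have hsm : (⟨algebraMap D K (x ^ k), (elemLocSub D K x).algebraMap_mem (x ^ k)⟩ :
        ↥(elemLocSub D K x)) • (g : K) ∈ G := G.smul_mem _ hgG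
    rwa [smulR, ← Algebra.smul_def] at hsm
  -- (β) : G ⊆ loc x FK
  have hGsubloc : ∀ z ∈ G, z ∈ elemLocModule D K x FK := by
    rintro z ⟨r, hr, rfl⟩
    rw [← hs] at hr
    show (r : K) ∈ elemLocModule D K x FK
    induction hr using Submodule.span_induction with
    | mem g hg => exact ⟨k, hFKT ▸ Submodule.subset_span ⟨g, hg, rfl⟩⟩
    | zero => exact ⟨0, by simpa using FK.zero_mem⟩
    | add a b _ _ ha hb =>
      obtain ⟨m1, hm1⟩ := ha
      obtain ⟨m2, hm2⟩ := hb
      refine ⟨m1 + m2, ?_⟩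
      have e : ((a + b : ↥(elemLocSub D K x)) : K) = (a : K) + (b : K) := rfl
      rw [e, smul_add]
      exact FK.add_mem (hup FK _ (Nat.le_add_right _ _) hm1)
        (hup FK _ (Nat.le_add_left _ _) hm2)
    | smul c a _ ha =>
      obtain ⟨m1, hm1⟩ := ha
      obtain ⟨mc, hmc⟩ := c.2
      obtain ⟨e, he⟩ := Submodule.mem_one.1 hmc
      refine ⟨mc + m1, ?_⟩
      have e1 : ((c • a : ↥(elemLocSub D K x)) : K) = (c : K) * (a : K) := rfl
      have e2 : x ^ (mc + m1) • ((c : K) * (a : K)) =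
          (x ^ mc • (c : K)) * (x ^ m1 • (a : K)) := by
        rw [smul_mul_smul_comm, ← pow_add]
      rw [e1, e2, ← he, ← Algebra.smul_def]
      exact FK.smul_mem _ hm1
  -- (1) : w ∈ 1/G → ∃ m, x^m • w ∈ 1/FK
  have hsub1 : ∀ w : K, w ∈ (1:Submodule ↥(elemLocSub D K x) K)/G →
      ∃ m : ℕ, x ^ m • w ∈ (1:Submodule D K)/FK := by
    intro w hw
    have hch3 : ∀ g : ↥(elemLocSub D K x), ∃ m : ℕ, g ∈ s →
        x ^ m • (w * (x ^ k • (g:K))) ∈ (1:Submodule D K) := by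
      intro g
      by_cases hg : g ∈ s
      · have hwg : w * (x ^ k • (g:K)) ∈ (1:Submodule ↥(elemLocSub D K x) K) :=
          mem_oneDiv.1 hw _ (hTsubG _ ⟨g, hg, rfl⟩)
        obtain ⟨m, hm⟩ := mem_oneR.1 hwg
        exact ⟨m, fun _ => hm⟩
      · exact ⟨0, fun h => absurd h hg⟩
    choose mm hmm using hch3
    refine ⟨s.sup mm, ?_⟩
    rw [hFKT]
    apply mem_oneDiv_span
    rintro a ⟨g, hg, rfl⟩
    have e : (x ^ s.sup mm • w) * (x ^ k • (g:K)) = x ^ s.sup mm • (w * (x ^ k • (g:K))) := by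
      rw [smul_mul_assoc]
    rw [e]
    exact hup _ _ (Finset.le_sup hg) (hmm g hg)
  -- (2) : vOp FK ⊆ vOp G
  have h2 : ∀ u ∈ vOp D K FK, u ∈ vOp ↥(elemLocSub D K x) K G := by
    intro u hu
    refine mem_oneDiv.2 fun w hw => ?_
    obtain ⟨m, hm⟩ := hsub1 w hw
    have h3 : u * (x ^ m • w) ∈ (1:Submodule D K) := mem_oneDiv.1 hu _ hm
    rw [mul_smul_comm] at h3
    exact mem_oneR.2 ⟨m, h3⟩
  -- (3) : vOp G ⊆ loc x (vOp FK)  (uses the PvMD property)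
  obtain ⟨H, hHfg, hHle, hHv⟩ := pvmd_inv hFne hFfg (hpvmd F hFne hFfg)
  have hHsubRG : ∀ h ∈ H, h ∈ (1:Submodule ↥(elemLocSub D K x) K)/G := by
    intro h hh
    refine mem_oneDiv.2 fun g hg => ?_
    obtain ⟨m, hm⟩ := hGsubloc g hg
    have hmem : h * (x ^ m • g) ∈ (1:Submodule D K) := mem_oneDiv.1 (hHle hh) _ hm
    rw [mul_smul_comm] at hmem
    exact mem_oneR.2 ⟨m, hmem⟩
  have h3 : ∀ v ∈ vOp ↥(elemLocSub D K x) K G, v ∈ elemLocModule D K x (vOp D K FK) := by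
    intro v hv
    obtain ⟨tH, htH⟩ := hHfg
    have hch4 : ∀ h : K, ∃ m : ℕ, h ∈ tH → x ^ m • (v * h) ∈ (1:Submodule D K) := by
      intro h
      by_cases hh : h ∈ tH
      · have hhH : h ∈ H := htH ▸ Submodule.subset_span hh
        have hvh : v * h ∈ (1:Submodule ↥(elemLocSub D K x) K) :=
          mem_oneDiv.1 hv _ (hHsubRG h hhH)
        obtain ⟨m, hm⟩ := mem_oneR.1 hvh
        exact ⟨m, fun _ => hm⟩
      · exact ⟨0, fun hc => absurd hc hh⟩
    choose mm hmm using hch4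
    refine ⟨tH.sup mm, ?_⟩
    have hgoal : x ^ tH.sup mm • v ∈ (1:Submodule D K)/H := by
      rw [← htH]
      apply mem_oneDiv_span
      intro a ha
      have e : (x ^ tH.sup mm • v) * a = x ^ tH.sup mm • (v * a) := by rw [smul_mul_assoc]
      rw [e]
      exact hup _ _ (Finset.le_sup ha) (hmm a ha)
    rw [hHv] at hgoal
    exact hgoal
  -- conclusion: V * (1/V) = 1
  apply le_antisymm (mul_oneDiv_le_one (vOp ↥(elemLocSub D K x) K G))
  intro z hz
  obtain ⟨kz, hkz⟩ := mem_oneR.1 hz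
  have hPle : ∀ p ∈ vOp D K FK * ((1:Submodule D K)/vOp D K FK),
      p ∈ vOp ↥(elemLocSub D K x) K G *
        ((1:Submodule ↥(elemLocSub D K x) K)/vOp ↥(elemLocSub D K x) K G) := by
    intro p hp
    refine Submodule.mul_induction_on hp (fun a ha b hb => ?_) (fun a b ha hb =>
      Submodule.add_mem _ ha hb)
    have hbV : b ∈ (1:Submodule ↥(elemLocSub D K x) K)/vOp ↥(elemLocSub D K x) K G := by
      refine mem_oneDiv.2 fun v hv => ?_
      obtain ⟨m, hm⟩ := h3 v hv
      have hbv : b * (x ^ m • v) ∈ (1:Submodule D K) := mem_oneDiv.1 hb _ hm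
      rw [mul_smul_comm] at hbv
      exact mem_oneR.2 ⟨m, hbv⟩
    exact Submodule.mul_mem_mul (h2 a ha) hbV
  have hloc : x ^ kz • z ∈
      elemLocModule D K x (vOp D K FK * ((1:Submodule D K)/vOp D K FK)) := hP hkz
  obtain ⟨m, hm⟩ := hloc
  rw [← mul_smul, ← pow_add] at hm
  exact sat hx0 _ (hPle _ hm)

end Bridge

end DSide

/-- **Proposition 2.6.** Let `D` be a P`v`MD with nonzero nonunits `x₁, …, xₙ` such that
`((x₁, …, xₙ)D)ᵛ = D`, and suppose that some `D_{x_j}` is not a G-GCD domain.  Let `∗` be the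
star operation of finite type `I^∗ := ⋂ᵢ I D_{x_i}`.  Then there exists a nonzero finitely
generated ideal `F` of `D` such that `Fᵛ` is not `∗`-invertible; consequently the set of
`∗`-invertible `∗`-ideals is strictly contained in the set of `t`-invertible `t`-ideals,
i.e. `Cl^∗(D) ⊊ Cl^t(D)`. -/
theorem exists_v_ideal_not_star_invertible
    (D K : Type*) [CommRing D] [IsDomain D] [Field K] [Algebra D K] [IsFractionRing D K]
    -- `D` is a P`v`MD:
    (hpvmd : ∀ F : Ideal D, F ≠ ⊥ → F.FG →
      tOp D K (Submodule.map (Algebra.linearMap D K) F *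
          ((1 : Submodule D K) / Submodule.map (Algebra.linearMap D K) F)) = 1)
    (n : ℕ) (hn : 1 ≤ n) (x : Fin n → D)
    (hx0 : ∀ i, x i ≠ 0) (hxu : ∀ i, ¬ IsUnit (x i))
    -- `((x₁, …, xₙ)D)ᵛ = D`:
    (hv : vOp D K (Submodule.map (Algebra.linearMap D K)
      (Ideal.span (Set.range x))) = 1)
    -- some `D_{x_j}` is not a G-GCD domain:
    (j : Fin n)
    (hj : ¬ ∀ F : Ideal ↥(elemLocSub D K (x j)), F ≠ ⊥ → F.FG →
      vOp ↥(elemLocSub D K (x j)) K (Submodule.map (Algebra.linearMap ↥(elemLocSub D K (x j)) K) F) *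
          ((1 : Submodule ↥(elemLocSub D K (x j)) K) /
            vOp ↥(elemLocSub D K (x j)) K
              (Submodule.map (Algebra.linearMap ↥(elemLocSub D K (x j)) K) F)) = 1) :
    -- there is a nonzero finitely generated ideal `F` with `Fᵛ` not `∗`-invertible …
    (∃ F : Ideal D, F ≠ ⊥ ∧ F.FG ∧
      (⨅ i : Fin n, elemLocModule D K (x i)
          (vOp D K (Submodule.map (Algebra.linearMap D K) F) *
            ((1 : Submodule D K) / vOp D K (Submodule.map (Algebra.linearMap D K) F)))) ≠
        (1 : Submodule D K)) ∧
    -- … consequently `Cl^∗(D) ⊊ Cl^t(D)`: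
    {I : Submodule D K | I ≠ ⊥ ∧ IsFractional (nonZeroDivisors D) I ∧
        (⨅ i : Fin n, elemLocModule D K (x i) I) = I ∧
        (⨅ i : Fin n, elemLocModule D K (x i) (I * ((1 : Submodule D K) / I))) = 1} ⊂
      {I : Submodule D K | I ≠ ⊥ ∧ IsFractional (nonZeroDivisors D) I ∧
        tOp D K I = I ∧ tOp D K (I * ((1 : Submodule D K) / I)) = 1} := by
  classical
  push_neg at hj
  obtain ⟨F0, hF0ne, hF0fg, hF0ne1⟩ := hj
  obtain ⟨F, hFne, hFfg, himp⟩ := bridge hpvmd (hx0 j) F0 hF0ne hF0fg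
  -- Goal 1
  have Fstar : (⨅ i : Fin n, elemLocModule D K (x i)
      (vOp D K (Submodule.map (Algebra.linearMap D K) F) *
        ((1 : Submodule D K) / vOp D K (Submodule.map (Algebra.linearMap D K) F)))) ≠
      (1 : Submodule D K) := by
    intro heq
    apply hF0ne1
    apply himp
    calc (1:Submodule D K) = ⨅ i : Fin n, elemLocModule D K (x i)
          (vOp D K (Submodule.map (Algebra.linearMap D K) F) *
            ((1 : Submodule D K) / vOp D K (Submodule.map (Algebra.linearMap D K) F))) :=
          heq.symm
      _ ≤ _ := iInf_le _ j
  refine ⟨⟨F, hFne, hFfg, Fstar⟩, ?_⟩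
  -- Goal 2
  have hsub : {I : Submodule D K | I ≠ ⊥ ∧ IsFractional (nonZeroDivisors D) I ∧
      (⨅ i : Fin n, elemLocModule D K (x i) I) = I ∧
      (⨅ i : Fin n, elemLocModule D K (x i) (I * ((1 : Submodule D K) / I))) = 1} ⊆
      {I : Submodule D K | I ≠ ⊥ ∧ IsFractional (nonZeroDivisors D) I ∧
      tOp D K I = I ∧ tOp D K (I * ((1 : Submodule D K) / I)) = 1} := by
    rintro I ⟨h1, h2, h3, h4⟩
    obtain ⟨h5, h6⟩ := star_to_t hn hx0 hv h3 h4
    exact ⟨h1, h2, h5, h6⟩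
  rw [Set.ssubset_iff_of_subset hsub]
  refine ⟨vOp D K (Submodule.map (Algebra.linearMap D K) F), ?_, ?_⟩
  · -- it is a t-invertible t-ideal
    have hFK1 : Submodule.map (Algebra.linearMap D K) F ≤ 1 := by
      rintro z ⟨a, _, rfl⟩
      exact Submodule.mem_one.2 ⟨a, rfl⟩
    have hI01 : vOp D K (Submodule.map (Algebra.linearMap D K) F) ≤ 1 := vOp_le_one hFK1
    have hIne : vOp D K (Submodule.map (Algebra.linearMap D K) F) ≠ ⊥ := by
      obtain ⟨a, haF, ha0⟩ := Submodule.exists_mem_ne_zero_of_ne_bot hFne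
      intro hb
      have hmem : algebraMap D K a ∈ vOp D K (Submodule.map (Algebra.linearMap D K) F) :=
        le_vOp _ ⟨a, haF, rfl⟩
      rw [hb, Submodule.mem_bot] at hmem
      exact ha0 (IsFractionRing.injective D K (by rw [hmem, map_zero]))
    refine ⟨hIne, ⟨1, Submonoid.one_mem _, fun b hb => ?_⟩, ?_, ?_⟩
    · obtain ⟨d, hd⟩ := Submodule.mem_one.1 (hI01 hb)
      exact ⟨d, by rw [hd, one_smul]⟩
    · refine le_antisymm (tOp_le fun J _ _ hJle => ?_) le_tOp
      have := vOp_mono hJle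
      rwa [vOp_vOp] at this
    · apply le_antisymm (tOp_le_one (mul_oneDiv_le_one _))
      calc (1:Submodule D K)
          = tOp D K (Submodule.map (Algebra.linearMap D K) F *
              ((1:Submodule D K) / Submodule.map (Algebra.linearMap D K) F)) :=
            (hpvmd F hFne hFfg).symm
        _ ≤ tOp D K (vOp D K (Submodule.map (Algebra.linearMap D K) F) *
              ((1:Submodule D K) / vOp D K (Submodule.map (Algebra.linearMap D K) F))) :=
            tOp_mono (mul_le_mul' (le_vOp _) (le_of_eq (oneDiv_vOp _).symm))
  · -- it is not a ∗-invertible ∗-ideal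
    rintro ⟨_, _, _, h4⟩
    exact Fstar h4
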